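/- arXiv:1311.2241 — 2 statements merged into one kernel-verified Lean document; each statement's English description precedes it below -/
import Mathlib

section
/- Let J be a symmetric positive definite n×n matrix whose sparsity pattern is that of a tree T = (V, E) (i.e., J_{ij} ≠ 0 for i ≠ j only if (i,j) ∈ E, where E is the edge set of a tree on V). Let P = J^{-1}. Then det(J)^{-1} = (∏_{i∈V} P_{ii}) · ∏_{(i,j)∈E} (P_{ii}P_{jj} - P_{ij}^2)/(P_{ii}P_{jj}). -/
open Matrix

namespace TreeDetAux
set_option linter.unusedSectionVars false
set_option maxHeartbeats 1600000

section Matrices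
variable {V : Type*} [Fintype V] [DecidableEq V]


noncomputable def schur (M : Matrix V V ℝ) (v : V) :
    Matrix {x // ¬ x = v} {x // ¬ x = v} ℝ :=
  Matrix.of fun i j => M i.1 j.1 - M i.1 v * M v j.1 / M v v

lemma posDef_submatrix_equiv {W : Type*} [Fintype W] [DecidableEq W]
    {M : Matrix V V ℝ} (hM : M.PosDef) (e : W ≃ V) :
    (M.submatrix e e).PosDef := by
  refine posDef_iff_dotProduct_mulVec.mpr ⟨(isHermitian_submatrix_equiv e).mpr hM.1, fun x hx => ?_⟩
  have hx' : (x ∘ e.symm) ≠ 0 := by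
    intro h
    apply hx
    funext i
    have := congrFun h (e i)
    simpa using this
  have := hM.dotProduct_mulVec_pos hx'
  rw [submatrix_mulVec_equiv]
  calc star x ⬝ᵥ ((M *ᵥ (x ∘ e.symm)) ∘ e)
      = ∑ i, star (x i) * (M *ᵥ (x ∘ e.symm)) (e i) := rfl
    _ = ∑ j, star ((x ∘ e.symm) j) * (M *ᵥ (x ∘ e.symm)) j := by
        rw [← Equiv.sum_comp e (fun j => star ((x ∘ e.symm) j) * (M *ᵥ (x ∘ e.symm)) j)]
        simp
    _ > 0 := this

lemma diag_pos {M : Matrix V V ℝ} (hM : M.PosDef) (v : V) : 0 < M v v := by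
  have h := hM.dotProduct_mulVec_pos (x := Pi.single v 1) (by simp [Pi.single_eq_same, funext_iff]; exact ⟨v, by simp⟩)
  simpa [dotProduct, mulVec, Pi.single_apply, Finset.sum_ite_eq', mul_comm] using h

lemma step (M : Matrix V V ℝ) (hM : M.PosDef) (v : V) :
    (schur M v).PosDef ∧
    M.det = M v v * (schur M v).det ∧
    (∀ i j : {x // ¬ x = v}, M⁻¹ i.1 j.1 = (schur M v)⁻¹ i j) ∧
    (∀ j : {x // ¬ x = v},
      M⁻¹ v j.1 = -((M v v)⁻¹ * ∑ k : {x // ¬ x = v}, M v k.1 * (schur M v)⁻¹ k j)) ∧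
    (M⁻¹ v v = (M v v)⁻¹ +
      (M v v)⁻¹ * (∑ k : {x // ¬ x = v}, ∑ l : {x // ¬ x = v},
        M v k.1 * (schur M v)⁻¹ k l * M l.1 v) * (M v v)⁻¹) := by
  classical
  have hMvv : 0 < M v v := diag_pos hM v
  set e : {x // x = v} ⊕ {x // ¬ x = v} ≃ V := Equiv.sumCompl (· = v) with he
  set A : Matrix {x // x = v} {x // x = v} ℝ := Matrix.of fun _ _ => M v v with hA
  set B : Matrix {x // x = v} {x // ¬ x = v} ℝ := Matrix.of fun _ j => M v j.1 with hB
  set C : Matrix {x // ¬ x = v} {x // x = v} ℝ := Matrix.of fun i _ => M i.1 v with hC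
  set D : Matrix {x // ¬ x = v} {x // ¬ x = v} ℝ := Matrix.of fun i j => M i.1 j.1 with hD
  have hN : M.submatrix e e = fromBlocks A B C D := by
    ext i j
    cases i with
    | inl i =>
      obtain ⟨i, rfl⟩ := i
      cases j with
      | inl j => obtain ⟨j, rfl⟩ := j; simp [e, fromBlocks, hA]
      | inr j => simp [e, fromBlocks, hB]
    | inr i =>
      cases j with
      | inl j => obtain ⟨j, rfl⟩ := j; simp [e, fromBlocks, hC]
      | inr j => simp [e, fromBlocks, hD]
  have hAdet : A.det = M v v := by rw [det_unique]; rfl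
  haveI : Invertible A := invertibleOfIsUnitDet A (by rw [hAdet]; exact (hMvv.ne').isUnit)
  have hinvA : ⅟A = Matrix.of fun _ _ => (M v v)⁻¹ := by
    rw [invOf_eq_nonsing_inv, inv_def, adjugate_subsingleton, hAdet]
    ext i j
    have : i = j := Subsingleton.elim _ _
    subst this
    simp [Ring.inverse_eq_inv]
  have hS : D - C * ⅟A * B = schur M v := by
    ext i j
    simp only [Matrix.sub_apply, mul_apply, hinvA, Fintype.sum_unique, schur, Matrix.of_apply,
      hB, hC, hD]
    rw [div_eq_mul_inv]
    ring
  have hNdet : (M.submatrix e e).det = M.det := det_submatrix_equiv_self e M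
  have hdet : M.det = M v v * (schur M v).det := by
    rw [← hNdet, hN, det_fromBlocks₁₁, hAdet, hS]
  have hSdet : (schur M v).det ≠ 0 := by
    have h0 : M.det ≠ 0 := hM.det_pos.ne'
    intro h; rw [hdet, h, mul_zero] at h0; exact h0 rfl
  haveI iS : Invertible (schur M v) := invertibleOfIsUnitDet _ (Ne.isUnit hSdet)
  haveI iS' : Invertible (D - C * ⅟A * B) := hS ▸ iS
  -- positive definiteness of the Schur complement
  have hsym : ∀ i j, M i j = M j i := by
    intro i j
    conv_lhs => rw [← hM.1]
    simp [conjTranspose_apply]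
  have hNpd : (fromBlocks A B C D).PosDef := hN ▸ posDef_submatrix_equiv hM e
  have hApd : A.PosDef := by
    refine posDef_iff_dotProduct_mulVec.mpr ⟨?_, ?_⟩
    · ext i j; simp [conjTranspose_apply, hA]
    · intro x hx
      have hxd : x default ≠ 0 := by
        intro h
        apply hx
        funext i
        simp [Subsingleton.elim i default, h]
      have h1 : star x ⬝ᵥ (A *ᵥ x) = M v v * (x default * x default) := by
        simp [dotProduct, mulVec, Fintype.sum_unique, hA]
        ring
      rw [h1]
      exact mul_pos hMvv (mul_self_pos.mpr hxd)
  have hCB : C = Bᴴ := by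
    ext i j
    simp [conjTranspose_apply, hB, hC, hsym i.1 v]
  have hSsd : (schur M v).PosSemidef := by
    have h1 := (PosDef.fromBlocks₁₁ B D hApd).mp (by rw [← hCB]; exact hNpd.posSemidef)
    have h2 : D - Bᴴ * A⁻¹ * B = schur M v := by
      rw [← hCB, ← invOf_eq_nonsing_inv, hS]
    rwa [h2] at h1
  have hSpd : (schur M v).PosDef := by
    refine posDef_iff_dotProduct_mulVec.mpr ⟨hSsd.1, fun x hx => ?_⟩
    rcases (hSsd.dotProduct_mulVec_nonneg x).lt_or_eq with h | h
    · exact h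
    · exfalso
      apply hx
      have h0 : (schur M v) *ᵥ x = 0 := (hSsd.dotProduct_mulVec_zero_iff x).mp h.symm
      have := congrArg (fun y => (schur M v)⁻¹ *ᵥ y) h0
      simpa [mulVec_mulVec, nonsing_inv_mul _ (Ne.isUnit hSdet)] using this
  -- inverse block formulas
  haveI iM : Invertible M := invertibleOfIsUnitDet M (Ne.isUnit hM.det_pos.ne')
  haveI iN : Invertible (M.submatrix e e) :=
    invertibleOfIsUnitDet _ (by rw [hNdet]; exact Ne.isUnit hM.det_pos.ne')
  haveI iFB : Invertible (fromBlocks A B C D) := hN ▸ iN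
  have hblocks : (fromBlocks A B C D)⁻¹ =
      fromBlocks (⅟A + ⅟A * B * ⅟(D - C * ⅟A * B) * C * ⅟A)
        (-(⅟A * B * ⅟(D - C * ⅟A * B))) (-(⅟(D - C * ⅟A * B) * C * ⅟A))
        (⅟(D - C * ⅟A * B)) := by
    rw [← invOf_eq_nonsing_inv]
    exact invOf_fromBlocks₁₁_eq A B C D
  have key : M⁻¹.submatrix e e = fromBlocks (⅟A + ⅟A * B * ⅟(D - C * ⅟A * B) * C * ⅟A)
        (-(⅟A * B * ⅟(D - C * ⅟A * B))) (-(⅟(D - C * ⅟A * B) * C * ⅟A))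
        (⅟(D - C * ⅟A * B)) := by
    rw [← inv_submatrix_equiv M e e, hN, hblocks]
  have hinvS : ⅟(D - C * ⅟A * B) = (schur M v)⁻¹ := by
    rw [invOf_eq_nonsing_inv, hS]
  refine ⟨hSpd, hdet, ?_, ?_, ?_⟩
  · intro i j
    have h1 := congrFun (congrFun key (Sum.inr i)) (Sum.inr j)
    simpa [e, hinvS] using h1
  · intro j
    have h1 := congrFun (congrFun key (Sum.inl ⟨v, rfl⟩)) (Sum.inr j)
    simp only [submatrix_apply, he, Equiv.sumCompl_apply_inl, Equiv.sumCompl_apply_inr,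
      fromBlocks_apply₁₂, hinvS] at h1
    rw [h1]
    simp [mul_apply, hinvA, hB, Fintype.sum_unique, Finset.mul_sum]
    exact Finset.sum_congr rfl fun _ _ => (mul_assoc _ _ _)
  · have h1 := congrFun (congrFun key (Sum.inl ⟨v, rfl⟩)) (Sum.inl ⟨v, rfl⟩)
    simp only [submatrix_apply, he, Equiv.sumCompl_apply_inl, fromBlocks_apply₁₁,
      hinvS] at h1
    rw [h1]
    simp only [Matrix.add_apply, mul_apply, hinvA, hB, hC, Matrix.of_apply, Fintype.sum_unique,
      Finset.sum_mul, Finset.mul_sum]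
    congr 1
    rw [Finset.sum_comm]
    apply Finset.sum_congr rfl
    intro k _
    apply Finset.sum_congr rfl
    intro l _
    ring


end Matrices

section Graph
variable {V : Type*} [Fintype V] [DecidableEq V]



lemma exists_leaf (G : SimpleGraph V) [DecidableRel G.Adj] (hG : G.IsTree)
    (h2 : 2 ≤ Fintype.card V) : ∃ v u, G.neighborFinset v = {u} := by
  have hdeg : ∀ v, 0 < G.degree v := by
    intro v
    obtain ⟨w, hw⟩ := Fintype.exists_ne_of_one_lt_card (by omega) v
    obtain ⟨p⟩ := hG.isConnected.preconnected v w
    have hnil : ¬ p.Nil := SimpleGraph.Walk.not_nil_of_ne (Ne.symm hw)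
    exact (SimpleGraph.degree_pos_iff_exists_adj G v).mpr ⟨_, p.adj_snd hnil⟩
  have hce := hG.card_edgeFinset
  have hsum : ∑ v, G.degree v = 2 * (Fintype.card V - 1) := by
    rw [SimpleGraph.sum_degrees_eq_twice_card_edges]
    omega
  have : ∃ v, G.degree v = 1 := by
    by_contra h
    push_neg at h
    have h2d : ∀ v, 2 ≤ G.degree v := by
      intro v
      have := hdeg v
      have := h v
      omega
    have := Finset.sum_le_sum (fun v (_ : v ∈ Finset.univ) => h2d v)
    rw [hsum] at this
    simp [Finset.sum_const, Finset.card_univ] at this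
    omega
  obtain ⟨v, hv⟩ := this
  obtain ⟨u, hu⟩ := Finset.card_eq_one.mp
    ((G.card_neighborFinset_eq_degree v).trans hv)
  exact ⟨v, u, hu⟩

lemma path_avoid_leaf {G : SimpleGraph V} [DecidableRel G.Adj] {v u : V}
    (hnb : G.neighborFinset v = {u}) {a b : V} (ha : a ≠ v) (hb : b ≠ v)
    (p : G.Walk a b) (hp : p.IsPath) : v ∉ p.support := by
  intro hv
  set q := p.takeUntil v hv with hq
  set r := p.dropUntil v hv with hr
  have hqn : ¬ q.Nil := SimpleGraph.Walk.not_nil_of_ne ha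
  have hrn : ¬ r.Nil := SimpleGraph.Walk.not_nil_of_ne (Ne.symm hb)
  have hqrn : ¬ q.reverse.Nil := SimpleGraph.Walk.not_nil_of_ne (Ne.symm ha)
  have hadjx : G.Adj v (q.reverse.getVert 1) := q.reverse.adj_snd hqrn
  have hadjy : G.Adj v (r.getVert 1) := r.adj_snd hrn
  have hx : q.reverse.getVert 1 = u := by
    have := (SimpleGraph.mem_neighborFinset G v _).mpr hadjx
    rw [hnb, Finset.mem_singleton] at this
    exact this
  have hy : r.getVert 1 = u := by
    have := (SimpleGraph.mem_neighborFinset G v _).mpr hadjy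
    rw [hnb, Finset.mem_singleton] at this
    exact this
  -- u occurs in q.support and in r.support.tail
  have hxq : u ∈ q.support := by
    rw [← hx]
    have h1 : q.reverse.getVert 1 ∈ q.reverse.tail.support :=
      SimpleGraph.Walk.start_mem_support _
    have h2 : q.reverse.getVert 1 ∈ q.reverse.support := by
      rw [← SimpleGraph.Walk.cons_support_tail hqrn]
      exact List.mem_cons_of_mem _ h1
    rwa [SimpleGraph.Walk.support_reverse, List.mem_reverse] at h2
  have hyr : u ∈ r.support.tail := by
    rw [← hy]
    have h1 : r.getVert 1 ∈ r.tail.support := SimpleGraph.Walk.start_mem_support _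
    have h2 : r.support.tail = r.tail.support := by
      have h3 := SimpleGraph.Walk.cons_support_tail hrn
      rw [← h3]
      rfl
    rwa [h2]
  have hspec : q.append r = p := SimpleGraph.Walk.take_spec p hv
  have hnodup : (q.support ++ r.support.tail).Nodup := by
    rw [← SimpleGraph.Walk.support_append, hspec]
    exact hp.support_nodup
  exact (List.nodup_append.mp hnodup).2.2 u hxq u hyr rfl

lemma lift_reachable {G : SimpleGraph V} {v : V} :
    ∀ {a b : V} (p : G.Walk a b), v ∉ p.support → (ha : ¬ a = v) → (hb : ¬ b = v) →
      (G.comap (Subtype.val : {x // ¬ x = v} → V)).Reachable ⟨a, ha⟩ ⟨b, hb⟩ := by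
  intro a b p
  induction p with
  | nil => intro _ ha hb; exact SimpleGraph.Reachable.refl _
  | @cons a c b h q ih =>
    intro hs ha hb
    rw [SimpleGraph.Walk.support_cons] at hs
    have hcs : v ∉ q.support := fun h' => hs (List.mem_cons_of_mem _ h')
    have hc : ¬ c = v := by
      intro h'
      exact hcs (h' ▸ SimpleGraph.Walk.start_mem_support q)
    have hadj : (G.comap (Subtype.val : {x // ¬ x = v} → V)).Adj ⟨a, ha⟩ ⟨c, hc⟩ := h
    exact (SimpleGraph.Adj.reachable hadj).trans (ih hcs hc hb)

lemma comap_isTree {G : SimpleGraph V} [DecidableRel G.Adj] (hG : G.IsTree) {v u : V}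
    (hnb : G.neighborFinset v = {u}) :
    (G.comap (Subtype.val : {x // ¬ x = v} → V)).IsTree := by
  have hadj_vu : G.Adj v u := by
    rw [← SimpleGraph.mem_neighborFinset, hnb]
    exact Finset.mem_singleton_self u
  constructor
  · rw [SimpleGraph.connected_iff]
    refine ⟨?_, ⟨⟨u, hadj_vu.ne'⟩⟩⟩
    intro a b
    obtain ⟨p, hp, -⟩ := hG.existsUnique_path a.1 b.1
    have hv : v ∉ p.support := path_avoid_leaf hnb a.2 b.2 p hp
    have := lift_reachable p hv a.2 b.2
    convert this
  · intro w c hc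
    exact hG.IsAcyclic _
      (hc.map (f := (SimpleGraph.Embedding.comap (Function.Embedding.subtype _) G).toHom)
        (Function.Embedding.injective _))

lemma edge_decomp {G : SimpleGraph V} [DecidableRel G.Adj] {v u : V}
    [DecidableRel (G.comap (Subtype.val : {x // ¬ x = v} → V)).Adj]
    (hnb : G.neighborFinset v = {u}) :
    G.edgeFinset = insert s(v, u)
      ((G.comap (Subtype.val : {x // ¬ x = v} → V)).edgeFinset.image
        (Sym2.map Subtype.val)) := by
  have hadj_vu : G.Adj v u := by
    rw [← SimpleGraph.mem_neighborFinset, hnb]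
    exact Finset.mem_singleton_self u
  have hnbr : ∀ w, G.Adj v w → w = u := by
    intro w hw
    have := (SimpleGraph.mem_neighborFinset G v w).mpr hw
    rwa [hnb, Finset.mem_singleton] at this
  ext e
  induction e with
  | _ a b =>
    simp only [SimpleGraph.mem_edgeFinset, SimpleGraph.mem_edgeSet, Finset.mem_insert,
      Finset.mem_image]
    constructor
    · intro h
      by_cases hav : a = v
      · subst hav
        left
        rw [hnbr b h]
      · by_cases hbv : b = v
        · subst hbv
          left
          rw [hnbr a h.symm, Sym2.eq_swap]
        · right
          exact ⟨s(⟨a, hav⟩, ⟨b, hbv⟩), by simpa using h, by rw [Sym2.map_pair_eq]⟩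
    · rintro (h | ⟨e', he', heq⟩)
      · rw [Sym2.eq_iff] at h
        rcases h with ⟨rfl, rfl⟩ | ⟨rfl, rfl⟩
        · exact hadj_vu
        · exact hadj_vu.symm
      · rename_i heq
        rw [← SimpleGraph.mem_edgeSet, ← heq]
        revert he'
        induction e' with
        | _ x y =>
          intro he'
          rw [Sym2.map_pair_eq]
          simpa using he'


end Graph

theorem aux (N : ℕ) : ∀ (V : Type) [Fintype V] [DecidableEq V]
    (G : SimpleGraph V) [DecidableRel G.Adj], Fintype.card V = N → G.IsTree →
    ∀ (J : Matrix V V ℝ), J.PosDef → (∀ i j, i ≠ j → ¬ G.Adj i j → J i j = 0) →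
    (J.det)⁻¹ =
      (∏ i, J⁻¹ i i) *
        ∏ e ∈ G.edgeFinset,
          Sym2.lift
            ⟨fun i j => (J⁻¹ i i * J⁻¹ j j - J⁻¹ i j * J⁻¹ j i) / (J⁻¹ i i * J⁻¹ j j),
             fun i j => by ring_nf⟩ e := by
  induction N using Nat.strong_induction_on with
  | _ N IH =>
  intro V instF instD G instA hcard hG J hJ hsparse
  have hne : Nonempty V := hG.isConnected.nonempty
  by_cases h1 : Fintype.card V = 1
  · -- base case: single vertex
    obtain ⟨a, ha⟩ := Fintype.card_eq_one_iff.mp h1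
    haveI : Unique V := ⟨⟨a⟩, ha⟩
    have hE : G.edgeFinset = ∅ := by
      ext e
      induction e with
      | _ x y =>
        simp only [SimpleGraph.mem_edgeFinset, SimpleGraph.mem_edgeSet, Finset.notMem_empty,
          iff_false]
        intro h
        have hxy : x = y := Subsingleton.elim x y
        subst hxy
        exact G.loopless.irrefl _ h
    rw [hE, Finset.prod_empty, mul_one]
    have hinv : J⁻¹ default default = (J.det)⁻¹ := by
      rw [inv_def, adjugate_subsingleton]
      simp [Ring.inverse_eq_inv]
    rw [Fintype.prod_unique (fun i => J⁻¹ i i), hinv]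
  · -- inductive step
    have h2 : 2 ≤ Fintype.card V := by
      have := Fintype.card_pos (α := V)
      omega
    obtain ⟨v, u, hnb⟩ := exists_leaf G hG h2
    haveI instGD : DecidableRel (G.comap (Subtype.val : {x // ¬ x = v} → V)).Adj :=
      fun a b => inferInstanceAs (Decidable (G.Adj a.1 b.1))
    have hG' : (G.comap (Subtype.val : {x // ¬ x = v} → V)).IsTree := comap_isTree hG hnb
    have hnbr : ∀ w, G.Adj v w → w = u := by
      intro w hw
      have := (SimpleGraph.mem_neighborFinset G v w).mpr hw
      rwa [hnb, Finset.mem_singleton] at this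
    have hadj_vu : G.Adj v u := by
      rw [← SimpleGraph.mem_neighborFinset, hnb]
      exact Finset.mem_singleton_self u
    have huv : ¬ u = v := hadj_vu.ne'
    set u' : {x // ¬ x = v} := ⟨u, huv⟩ with hu'def
    obtain ⟨hSpd, hdet, hPQ, hPv, hPvv⟩ := step J hJ v
    set S := schur J v with hSdef
    have hcard' : Fintype.card {x // ¬ x = v} = N - 1 := by
      rw [Fintype.card_subtype_compl, Fintype.card_subtype_eq, hcard]
    have hsymJ : ∀ i j, J i j = J j i := by
      intro i j
      conv_lhs => rw [← hJ.1]
      simp [conjTranspose_apply]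
    have hJv0 : ∀ w : {x // ¬ x = v}, w.1 ≠ u → J v w.1 = 0 := by
      intro w hw
      exact hsparse v w.1 (fun h => w.2 h.symm) (fun hadj => hw (hnbr w.1 hadj))
    have hSsparse : ∀ i j : {x // ¬ x = v}, i ≠ j → ¬ (G.comap (Subtype.val : {x // ¬ x = v} → V)).Adj i j → S i j = 0 := by
      intro i j hij hadj
      have h0 : J i.1 j.1 = 0 := hsparse i.1 j.1 (fun h => hij (Subtype.ext h)) hadj
      have h1 : J i.1 v * J v j.1 = 0 := by
        by_cases hiu : i.1 = u
        · have hju : j.1 ≠ u := by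
            intro h
            exact hij (Subtype.ext (hiu.trans h.symm))
          rw [hJv0 j hju, mul_zero]
        · have : J i.1 v = 0 := by
            rw [hsymJ]
            exact hJv0 i hiu
          rw [this, zero_mul]
      simp [hSdef, schur, h0, h1]
    have hIH := IH (N - 1) (by omega) {x // ¬ x = v} (G.comap (Subtype.val : {x // ¬ x = v} → V)) hcard' hG' S hSpd hSsparse
    -- key entry values
    have hJvv : 0 < J v v := diag_pos hJ v
    have hQuu : 0 < S⁻¹ u' u' := diag_pos hSpd.inv u'
    have hPvvpos : 0 < J⁻¹ v v := diag_pos hJ.inv v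
    have hPvu : J⁻¹ v u = -((J v v)⁻¹ * (J v u * S⁻¹ u' u')) := by
      have h := hPv u'
      rw [Finset.sum_eq_single u'
        (fun k _ hk => by rw [hJv0 k (fun h' => hk (Subtype.ext h')), zero_mul])
        (fun h' => absurd (Finset.mem_univ u') h')] at h
      exact h
    have hPvv' : J⁻¹ v v = (J v v)⁻¹ + (J v v)⁻¹ * (J v u * S⁻¹ u' u' * J u v) * (J v v)⁻¹ := by
      rw [hPvv]
      have hsum : (∑ k : {x // ¬ x = v}, ∑ l : {x // ¬ x = v},
          J v k.1 * S⁻¹ k l * J l.1 v) = J v u * S⁻¹ u' u' * J u v := by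
        rw [Finset.sum_eq_single u'
          (fun k _ hk => Finset.sum_eq_zero fun l _ => by
            rw [hJv0 k (fun h' => hk (Subtype.ext h')), zero_mul, zero_mul])
          (fun h' => absurd (Finset.mem_univ u') h')]
        rw [Finset.sum_eq_single u'
          (fun l _ hl => by
            rw [hsymJ l.1 v, hJv0 l (fun h' => hl (Subtype.ext h')), mul_zero])
          (fun h' => absurd (Finset.mem_univ u') h')]
      rw [hsum]
    have hPuv : J⁻¹ u v = J⁻¹ v u := by
      haveI : Invertible J := invertibleOfIsUnitDet J (Ne.isUnit hJ.det_pos.ne')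
      conv_lhs => rw [← hJ.1.inv]
      simp [conjTranspose_apply]
    have hPuu : J⁻¹ u u = S⁻¹ u' u' := hPQ u' u'
    -- vertex product decomposition
    have hprodV : (∏ i, J⁻¹ i i) = J⁻¹ v v * ∏ i : {x // ¬ x = v}, S⁻¹ i i := by
      rw [Finset.prod_eq_mul_prod_sdiff_singleton_of_mem (Finset.mem_univ v) (fun i => J⁻¹ i i)]
      congr 1
      rw [Finset.prod_subtype (Finset.univ \ {v}) (p := fun x => ¬ x = v) (by simp)
        (fun i => J⁻¹ i i)]
      exact Finset.prod_congr rfl fun i _ => hPQ i i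
    -- edge product decomposition
    have hnotmem : s(v, u) ∉ ((G.comap (Subtype.val : {x // ¬ x = v} → V)).edgeFinset.image (Sym2.map Subtype.val)) := by
      intro hmem
      obtain ⟨e', -, heq⟩ := Finset.mem_image.mp hmem
      have hv : v ∈ Sym2.map Subtype.val e' := by
        rw [heq]
        simp
      obtain ⟨w, -, hw⟩ := Sym2.mem_map.mp hv
      exact w.2 hw
    have hprodE : (∏ e ∈ G.edgeFinset,
          Sym2.lift
            ⟨fun i j => (J⁻¹ i i * J⁻¹ j j - J⁻¹ i j * J⁻¹ j i) / (J⁻¹ i i * J⁻¹ j j),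
             fun i j => by ring_nf⟩ e) =
        ((J⁻¹ v v * J⁻¹ u u - J⁻¹ v u * J⁻¹ u v) / (J⁻¹ v v * J⁻¹ u u)) *
          ∏ e ∈ (G.comap (Subtype.val : {x // ¬ x = v} → V)).edgeFinset,
            Sym2.lift
              ⟨fun i j => (S⁻¹ i i * S⁻¹ j j - S⁻¹ i j * S⁻¹ j i) / (S⁻¹ i i * S⁻¹ j j),
               fun i j => by ring_nf⟩ e := by
      rw [edge_decomp hnb, Finset.prod_insert hnotmem,
        Finset.prod_image (fun x _ y _ h =>
          (Sym2.map.injective Subtype.val_injective) h)]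
      congr 1
      refine Finset.prod_congr rfl fun e' _ => ?_
      induction e' with
      | _ x y =>
        rw [Sym2.map_pair_eq]
        simp only [Sym2.lift_mk]
        rw [hPQ x x, hPQ y y, hPQ x y, hPQ y x]
    -- final assembly
    rw [hdet, mul_inv, hIH, hprodV, hprodE]
    have hfact : J⁻¹ v v * ((J⁻¹ v v * J⁻¹ u u - J⁻¹ v u * J⁻¹ u v) / (J⁻¹ v v * J⁻¹ u u))
        = (J v v)⁻¹ := by
      rw [hPuv, hPuu, hPvu, hPvv', hsymJ u v]
      have hane : J v v ≠ 0 := hJvv.ne'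
      have hcne : S⁻¹ u' u' ≠ 0 := hQuu.ne'
      set a := J v v with hadef
      set b := J v u with hbdef
      set c := S⁻¹ u' u' with hcdef
      have hE : a⁻¹ + a⁻¹ * (b * c * b) * a⁻¹ ≠ 0 := by
        have h0 : 0 < a⁻¹ + a⁻¹ * (b * c * b) * a⁻¹ := by
          nlinarith [inv_pos.mpr hJvv, mul_nonneg hQuu.le (sq_nonneg (a⁻¹ * b))]
        exact h0.ne'
      have h1 : (a⁻¹ + a⁻¹ * (b * c * b) * a⁻¹) * c -
          -(a⁻¹ * (b * c)) * -(a⁻¹ * (b * c)) = c / a := by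
        field_simp
        ring
      rw [h1]
      field_simp
    calc (J v v)⁻¹ * ((∏ i : {x // ¬ x = v}, S⁻¹ i i) *
            ∏ e ∈ (G.comap (Subtype.val : {x // ¬ x = v} → V)).edgeFinset, Sym2.lift
              ⟨fun i j => (S⁻¹ i i * S⁻¹ j j - S⁻¹ i j * S⁻¹ j i) / (S⁻¹ i i * S⁻¹ j j),
               fun i j => by ring_nf⟩ e)
        = (J⁻¹ v v * ((J⁻¹ v v * J⁻¹ u u - J⁻¹ v u * J⁻¹ u v) / (J⁻¹ v v * J⁻¹ u u))) *
          ((∏ i : {x // ¬ x = v}, S⁻¹ i i) *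
            ∏ e ∈ (G.comap (Subtype.val : {x // ¬ x = v} → V)).edgeFinset, Sym2.lift
              ⟨fun i j => (S⁻¹ i i * S⁻¹ j j - S⁻¹ i j * S⁻¹ j i) / (S⁻¹ i i * S⁻¹ j j),
               fun i j => by ring_nf⟩ e) := by rw [hfact]
      _ = _ := by ring


end TreeDetAux

open Matrix

theorem tree_det_factorization {n : ℕ} (G : SimpleGraph (Fin n)) [DecidableRel G.Adj]
    (hG : G.IsTree) (J : Matrix (Fin n) (Fin n) ℝ) (hJ : J.PosDef)
    (hsparse : ∀ i j, i ≠ j → ¬ G.Adj i j → J i j = 0) :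
    (J.det)⁻¹ =
      (∏ i, J⁻¹ i i) *
        ∏ e ∈ G.edgeFinset,
          Sym2.lift
            ⟨fun i j => (J⁻¹ i i * J⁻¹ j j - J⁻¹ i j * J⁻¹ j i) / (J⁻¹ i i * J⁻¹ j j),
             fun i j => by ring_nf⟩ e := by
  exact TreeDetAux.aux (Fintype.card (Fin n)) (Fin n) G rfl hG J hJ hsparse
end

section
/- Let Σ be a symmetric positive definite n×n matrix such that J = Σ^{-1} is sparse with respect to a tree T = (V, E). Then for every edge (i,j) ∈ E, J_{ij} = Σ_{ij} / (Σ_{ij}^2 - Σ_{ii}Σ_{jj}), and for every vertex i, J_{ii} = (1 - deg(i)) Σ_{ii}^{-1} + ∑_{j ∈ N(i)} (Σ_{ii} - Σ_{ij} Σ_{jj}^{-1} Σ_{ji})^{-1}. -/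
open Matrix
section MatrixHelpers

variable {ι κ : Type*} [Fintype ι] [DecidableEq ι] [Fintype κ] [DecidableEq κ]

lemma posDef_submatrix_inj {M : Matrix ι ι ℝ} (hM : M.PosDef) {f : κ → ι}
    (hf : Function.Injective f) : (M.submatrix f f).PosDef := by
  rw [posDef_iff_dotProduct_mulVec]
  constructor
  · ext a b
    simp only [conjTranspose_apply, submatrix_apply, star_trivial]
    have := hM.1.apply (f a) (f b)
    simpa using this
  · intro x hx
    set y : ι → ℝ := fun c => ∑ a : κ, if f a = c then x a else 0 with hy
    have hyf : ∀ a : κ, y (f a) = x a := by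
      intro a
      simp only [hy]
      have h : ∀ b, (if f b = f a then x b else 0) = if b = a then x b else 0 := fun b => by
        simp [hf.eq_iff]
      rw [Finset.sum_congr rfl fun b _ => h b, Finset.sum_ite_eq' Finset.univ a x]
      simp
    have hy0 : y ≠ 0 := by
      intro h
      apply hx
      funext a
      have := congrFun h (f a)
      rwa [hyf a] at this
    have key : ∀ F : ι → ℝ, (∑ c, y c * F c) = ∑ a, x a * F (f a) := by
      intro F
      simp only [hy, Finset.sum_mul, ite_mul, zero_mul]
      rw [Finset.sum_comm]
      refine Finset.sum_congr rfl fun a _ => ?_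
      rw [Finset.sum_ite_eq Finset.univ (f a) (fun c => x a * F c)]
      simp
    have hq := hM.dotProduct_mulVec_pos hy0
    have : star x ⬝ᵥ (M.submatrix f f *ᵥ x) = star y ⬝ᵥ (M *ᵥ y) := by
      simp only [dotProduct, mulVec, dotProduct, star_trivial, Pi.star_apply]
      rw [key (fun c => ∑ d, M c d * y d)]
      refine Finset.sum_congr rfl fun a _ => ?_
      congr 1
      have h1 : (∑ d, M (f a) d * y d) = ∑ b, x b * M (f a) (f b) := by
        rw [Finset.sum_congr rfl fun d _ => mul_comm (M (f a) d) (y d)]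
        exact key (fun d => M (f a) d)
      rw [h1]
      exact Finset.sum_congr rfl fun b _ => by simp [submatrix_apply, mul_comm]
    rw [this]
    exact hq

lemma inv_submatrix_equiv' {M : Matrix ι ι ℝ} (hM : IsUnit M.det) (e : κ ≃ ι) :
    (M.submatrix e e)⁻¹ = (M⁻¹).submatrix e e := by
  apply inv_eq_right_inv
  rw [Matrix.submatrix_mul_equiv, Matrix.mul_nonsing_inv _ hM, submatrix_one_equiv]

end MatrixHelpers

section Workhorses

variable {ι κ : Type*} [Fintype ι] [DecidableEq ι] [Fintype κ] [DecidableEq κ]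

lemma schur_block {M : Matrix ι ι ℝ} (hM : M.PosDef) (f : κ → ι) (hf : Function.Injective f)
    [DecidablePred (· ∈ Set.range f)] :
    ((M⁻¹).submatrix f f)⁻¹ =
      M.submatrix f f -
        M.submatrix f (Subtype.val : {x // x ∉ Set.range f} → ι) *
          ((M.submatrix (Subtype.val : {x // x ∉ Set.range f} → ι) Subtype.val)⁻¹ :
            Matrix {x // x ∉ Set.range f} {x // x ∉ Set.range f} ℝ) *
          M.submatrix (Subtype.val : {x // x ∉ Set.range f} → ι) f := by
  set A := M.submatrix f f with hA
  set B := M.submatrix f (Subtype.val : {x // x ∉ Set.range f} → ι) with hB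
  set C := M.submatrix (Subtype.val : {x // x ∉ Set.range f} → ι) f with hC
  set D := M.submatrix (Subtype.val : {x // x ∉ Set.range f} → ι) Subtype.val with hD
  set e : κ ⊕ {x // x ∉ Set.range f} ≃ ι :=
    (Equiv.sumCongr (Equiv.ofInjective f hf) (Equiv.refl _)).trans
      (Equiv.sumCompl (· ∈ Set.range f)) with he
  have he₁ : ∀ a : κ, e (Sum.inl a) = f a := fun a => by simp [he]
  have he₂ : ∀ c : {x // x ∉ Set.range f}, e (Sum.inr c) = c.val := fun c => by simp [he]
  have hN : M.submatrix ⇑e ⇑e = fromBlocks A B C D := by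
    ext x y
    cases x <;> cases y <;>
      simp [fromBlocks, he₁, he₂, hA, hB, hC, hD, submatrix_apply]
  have hDpd : D.PosDef := posDef_submatrix_inj hM Subtype.val_injective
  have hNpd : (fromBlocks A B C D).PosDef := hN ▸ posDef_submatrix_inj hM e.injective
  haveI iD : Invertible D := D.invertibleOfIsUnitDet hDpd.det_pos.ne'.isUnit
  haveI iN : Invertible (fromBlocks A B C D) :=
    (fromBlocks A B C D).invertibleOfIsUnitDet hNpd.det_pos.ne'.isUnit
  haveI iS : Invertible (A - B * ⅟D * C) := invertibleOfFromBlocks₂₂Invertible A B C D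
  have key := invOf_fromBlocks₂₂_eq A B C D
  have hinv : ⅟(fromBlocks A B C D) = (M⁻¹).submatrix ⇑e ⇑e := by
    rw [invOf_eq_nonsing_inv, ← hN, inv_submatrix_equiv' hM.det_pos.ne'.isUnit e]
  have h11 : (M⁻¹).submatrix f f = ⅟(A - B * ⅟D * C) := by
    have := congrArg Matrix.toBlocks₁₁ (hinv.symm.trans key)
    rw [toBlocks_fromBlocks₁₁] at this
    rw [← this]
    ext a b
    simp [toBlocks₁₁, submatrix_apply, he₁]
  rw [h11, invOf_eq_nonsing_inv, Matrix.nonsing_inv_nonsing_inv _ (isUnit_det_of_invertible _),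
    invOf_eq_nonsing_inv]

lemma inv_block {M : Matrix ι ι ℝ} (hM : M.PosDef) (f : κ → ι) (hf : Function.Injective f)
    [DecidablePred (· ∈ Set.range f)]
    (h1 : ∀ (a : κ) (c : ι), c ∉ Set.range f → M (f a) c = 0)
    (h2 : ∀ (a : κ) (c : ι), c ∉ Set.range f → M c (f a) = 0) :
    (∀ (a : κ) (c : ι), c ∉ Set.range f → M⁻¹ (f a) c = 0 ∧ M⁻¹ c (f a) = 0) ∧
    (∀ a b : κ, M⁻¹ (f a) (f b) = (M.submatrix f f)⁻¹ a b) := by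
  set A := M.submatrix f f with hA
  set D := M.submatrix (Subtype.val : {x // x ∉ Set.range f} → ι) Subtype.val with hD
  set e : κ ⊕ {x // x ∉ Set.range f} ≃ ι :=
    (Equiv.sumCongr (Equiv.ofInjective f hf) (Equiv.refl _)).trans
      (Equiv.sumCompl (· ∈ Set.range f)) with he
  have he₁ : ∀ a : κ, e (Sum.inl a) = f a := fun a => by simp [he]
  have he₂ : ∀ c : {x // x ∉ Set.range f}, e (Sum.inr c) = c.val := fun c => by simp [he]
  have hN : M.submatrix ⇑e ⇑e = fromBlocks A 0 0 D := by
    ext x y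
    cases x with
    | inl a =>
      cases y with
      | inl b => simp [fromBlocks, he₁, hA, submatrix_apply]
      | inr c => simp [fromBlocks, he₁, he₂, submatrix_apply, h1 a c.val c.property]
    | inr c =>
      cases y with
      | inl b => simp [fromBlocks, he₁, he₂, submatrix_apply, h2 b c.val c.property]
      | inr d => simp [fromBlocks, he₂, hD, submatrix_apply]
  have hApd : A.PosDef := posDef_submatrix_inj hM hf
  have hDpd : D.PosDef := posDef_submatrix_inj hM Subtype.val_injective
  have hNpd : (fromBlocks A 0 0 D).PosDef := hN ▸ posDef_submatrix_inj hM e.injective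
  haveI iA : Invertible A := A.invertibleOfIsUnitDet hApd.det_pos.ne'.isUnit
  haveI iD : Invertible D := D.invertibleOfIsUnitDet hDpd.det_pos.ne'.isUnit
  haveI iN : Invertible (fromBlocks A (0 : Matrix κ _ ℝ) 0 D) :=
    (fromBlocks A 0 0 D).invertibleOfIsUnitDet hNpd.det_pos.ne'.isUnit
  have key := invOf_fromBlocks_zero₂₁_eq A 0 D
  have hinv : ⅟(fromBlocks A (0 : Matrix κ _ ℝ) 0 D) = (M⁻¹).submatrix ⇑e ⇑e := by
    rw [invOf_eq_nonsing_inv, ← hN, inv_submatrix_equiv' hM.det_pos.ne'.isUnit e]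
  have key2 : (M⁻¹).submatrix ⇑e ⇑e = fromBlocks (⅟A) 0 0 (⅟D) := by
    rw [← hinv, key]
    simp
  constructor
  · intro a c hc
    constructor
    · have := congrFun (congrFun key2 (Sum.inl a)) (Sum.inr ⟨c, hc⟩)
      simpa [submatrix_apply, he₁, he₂, fromBlocks] using this
    · have := congrFun (congrFun key2 (Sum.inr ⟨c, hc⟩)) (Sum.inl a)
      simpa [submatrix_apply, he₁, he₂, fromBlocks] using this
  · intro a b
    have := congrFun (congrFun key2 (Sum.inl a)) (Sum.inl b)
    simp only [submatrix_apply, he₁, fromBlocks, Sum.elim_inl, of_apply] at this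
    rw [this, invOf_eq_nonsing_inv]

end Workhorses

section Small

lemma inv_one_entry (A : Matrix (Fin 1) (Fin 1) ℝ) : A⁻¹ 0 0 = (A 0 0)⁻¹ := by
  rw [Matrix.inv_def, Matrix.adjugate_fin_one, Matrix.det_fin_one]
  simp

lemma inv_two_01 (A : Matrix (Fin 2) (Fin 2) ℝ) : A⁻¹ 0 1 = (A.det)⁻¹ * (-A 0 1) := by
  rw [Matrix.inv_def, Matrix.adjugate_fin_two]
  simp

lemma inv_two_00 (A : Matrix (Fin 2) (Fin 2) ℝ) : A⁻¹ 0 0 = (A.det)⁻¹ * A 1 1 := by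
  rw [Matrix.inv_def, Matrix.adjugate_fin_two]
  simp

end Small

section GraphLayer

variable {V : Type*} {G : SimpleGraph V}

/-- Connectivity within a vertex subset `s`. -/
def RelW (G : SimpleGraph V) (s : Set V) (u v : V) : Prop :=
  ∃ p : G.Walk u v, ∀ x ∈ p.support, x ∈ s

lemma RelW.refl {s : Set V} {u : V} (hu : u ∈ s) : RelW G s u u :=
  ⟨SimpleGraph.Walk.nil, by simp [hu]⟩

lemma RelW.symm {s : Set V} {u v : V} (h : RelW G s u v) : RelW G s v u := by
  obtain ⟨p, hp⟩ := h
  exact ⟨p.reverse, fun x hx => hp x (by simpa using hx)⟩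

lemma RelW.trans {s : Set V} {u v w : V} (h : RelW G s u v) (h' : RelW G s v w) :
    RelW G s u w := by
  obtain ⟨p, hp⟩ := h
  obtain ⟨q, hq⟩ := h'
  refine ⟨p.append q, fun x hx => ?_⟩
  rw [SimpleGraph.Walk.mem_support_append_iff] at hx
  exact hx.elim (hp x) (hq x)

lemma RelW.adj_closure {s : Set V} {u v w : V} (h : RelW G s u v) (hvw : G.Adj v w)
    (hw : w ∈ s) : RelW G s u w := by
  obtain ⟨p, hp⟩ := h
  refine ⟨p.concat hvw, fun x hx => ?_⟩
  rw [SimpleGraph.Walk.support_concat, List.mem_append] at hx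
  rcases hx with hx | hx
  · exact hp x hx
  · rw [List.mem_singleton] at hx
    rw [hx]; exact hw

lemma RelW.mono {s t : Set V} (hst : s ⊆ t) {u v : V} (h : RelW G s u v) : RelW G t u v := by
  obtain ⟨p, hp⟩ := h
  exact ⟨p, fun x hx => hst (hp x hx)⟩

lemma RelW.mem_left {s : Set V} {u v : V} (h : RelW G s u v) : u ∈ s := by
  obtain ⟨p, hp⟩ := h
  exact hp u p.start_mem_support

lemma RelW.mem_right {s : Set V} {u v : V} (h : RelW G s u v) : v ∈ s := by
  obtain ⟨p, hp⟩ := h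
  exact hp v p.end_mem_support

lemma KG1 [DecidableEq V] (hG : G.IsTree) {i c d : V} (hic : G.Adj i c) (hid : G.Adj i d) (hcd : c ≠ d) :
    ¬ RelW G {x | x ≠ i} c d := by
  rintro ⟨w, hw⟩
  set p := w.toPath with hp
  have hps : ∀ x ∈ (p : G.Walk c d).support, x ≠ i := fun x hx =>
    hw x (SimpleGraph.Walk.support_toPath_subset w hx)
  have hq : (SimpleGraph.Walk.cons hic.symm (SimpleGraph.Walk.cons hid
      SimpleGraph.Walk.nil) : G.Walk c d).IsPath := by
    rw [SimpleGraph.Walk.cons_isPath_iff]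
    refine ⟨?_, by simp [hic.ne', hcd]⟩
    rw [SimpleGraph.Walk.cons_isPath_iff]
    exact ⟨SimpleGraph.Walk.IsPath.nil, by simp [hid.ne, hcd]⟩
  have := hG.IsAcyclic
  rw [SimpleGraph.isAcyclic_iff_path_unique] at this
  have heq := this p ⟨_, hq⟩
  have : i ∈ (p : G.Walk c d).support := by
    rw [heq]
    simp
  exact hps i this rfl

lemma KG2 [DecidableEq V] (hG : G.IsTree) {i j c d : V} (hij : G.Adj i j) (hic : G.Adj i c) (hjd : G.Adj j d)
    (hci : c ≠ i) (hcj : c ≠ j) (hdi : d ≠ i) (hdj : d ≠ j) :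
    ¬ RelW G {x | x ≠ i ∧ x ≠ j} c d := by
  rintro ⟨w, hw⟩
  set p := w.toPath with hp
  have hps : ∀ x ∈ (p : G.Walk c d).support, x ≠ i ∧ x ≠ j := fun x hx =>
    hw x (SimpleGraph.Walk.support_toPath_subset w hx)
  -- big path i - c - ... - d - j
  have hW : (SimpleGraph.Walk.cons hic ((p : G.Walk c d).append
      (SimpleGraph.Walk.cons hjd.symm SimpleGraph.Walk.nil)) : G.Walk i j).IsPath := by
    rw [SimpleGraph.Walk.cons_isPath_iff]
    constructor
    · apply SimpleGraph.Walk.IsPath.mk'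
      rw [SimpleGraph.Walk.support_append]
      simp only [SimpleGraph.Walk.support_cons, SimpleGraph.Walk.support_nil, List.tail_cons]
      rw [List.nodup_append]
      refine ⟨p.2.support_nodup, List.nodup_singleton _, ?_⟩
      intro x hx
      simp only [List.mem_singleton]
      intro b hb hxj
      exact (hps x hx).2 (hxj.trans hb)
    · rw [SimpleGraph.Walk.mem_support_append_iff]
      rintro (h | h)
      · exact (hps i h).1 rfl
      · simp only [SimpleGraph.Walk.support_cons, SimpleGraph.Walk.support_nil,
          List.mem_cons, List.not_mem_nil, or_false] at h
        rcases h with h | h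
        · exact hdi h.symm
        · exact hij.ne h
  have hW2 : (SimpleGraph.Walk.cons hij SimpleGraph.Walk.nil : G.Walk i j).IsPath := by
    rw [SimpleGraph.Walk.cons_isPath_iff]
    exact ⟨SimpleGraph.Walk.IsPath.nil, by simp [hij.ne]⟩
  have hac := hG.IsAcyclic
  rw [SimpleGraph.isAcyclic_iff_path_unique] at hac
  have heq := hac ⟨_, hW⟩ ⟨_, hW2⟩
  have heqw := congrArg Subtype.val heq
  simp only at heqw
  have hc : c ∈ (SimpleGraph.Walk.cons hij SimpleGraph.Walk.nil : G.Walk i j).support := by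
    rw [← heqw]
    simp
  simp only [SimpleGraph.Walk.support_cons, SimpleGraph.Walk.support_nil, List.mem_cons,
    List.not_mem_nil, or_false] at hc
  rcases hc with h | h
  · exact hci h
  · exact hcj h

end GraphLayer

section ClassLemmas

variable {n : ℕ} {G : SimpleGraph (Fin n)} {J : Matrix (Fin n) (Fin n) ℝ}

lemma class_cross (hJ : J.PosDef) (hsp : ∀ a b : Fin n, a ≠ b → ¬ G.Adj a b → J a b = 0)
    (p : Fin n → Prop) [DecidablePred p]
    {c d : Fin n} (hc : p c) (hd : p d) (hrel : ¬ RelW G {x | p x} c d) :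
    (J.submatrix (Subtype.val : {x // p x} → Fin n) Subtype.val)⁻¹ ⟨c, hc⟩ ⟨d, hd⟩ = 0 := by
  classical
  set M' := J.submatrix (Subtype.val : {x // p x} → Fin n) Subtype.val with hM'
  have hM'pd : M'.PosDef := posDef_submatrix_inj hJ Subtype.val_injective
  set q : {x // p x} → Prop := fun x => RelW G {x | p x} c x.val with hq
  have hrangeq : ∀ b : {x // p x}, b ∈ Set.range (Subtype.val : {x // q x} → {x // p x}) ↔ q b := by
    intro b
    constructor
    · rintro ⟨a, rfl⟩; exact a.2
    · intro hb; exact ⟨⟨b, hb⟩, rfl⟩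
  have hcl : ∀ (a : {x // q x}) (b : {x // p x}),
      b ∉ Set.range (Subtype.val : {x // q x} → {x // p x}) → M' a.val b = 0 := by
    intro a b hb
    rw [hrangeq] at hb
    have ha : RelW G {x | p x} c a.val.val := a.2
    by_cases heq : a.val.val = b.val
    · exfalso
      apply hb
      show RelW G {x | p x} c b.val
      rw [← heq]
      exact ha
    · by_cases hadj : G.Adj a.val.val b.val
      · exact absurd (ha.adj_closure hadj b.2) hb
      · exact hsp _ _ heq hadj
  have hJs : ∀ a b, J a b = J b a := fun a b => by
    have := hJ.isHermitian.apply b a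
    simpa using this
  have hcl2 : ∀ (a : {x // q x}) (b : {x // p x}),
      b ∉ Set.range (Subtype.val : {x // q x} → {x // p x}) → M' b a.val = 0 := by
    intro a b hb
    have := hcl a b hb
    rw [hM'] at this ⊢
    simp only [submatrix_apply] at this ⊢
    rw [hJs]
    exact this
  have hib := (inv_block hM'pd (Subtype.val : {x // q x} → {x // p x})
    Subtype.val_injective hcl hcl2).1
  have hc0 : q (⟨c, hc⟩ : {x // p x}) := RelW.refl hc
  have hd0 : (⟨d, hd⟩ : {x // p x}) ∉ Set.range (Subtype.val : {x // q x} → {x // p x}) := by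
    rw [hrangeq]
    exact hrel
  have := (hib ⟨⟨c, hc⟩, hc0⟩ ⟨d, hd⟩ hd0).1
  exact this

lemma class_diag (hJ : J.PosDef) (hsp : ∀ a b : Fin n, a ≠ b → ¬ G.Adj a b → J a b = 0)
    (p₁ p₂ : Fin n → Prop) [DecidablePred p₁] [DecidablePred p₂]
    {k : Fin n} (h1 : p₁ k) (h2 : p₂ k)
    (hcls : ∀ x, RelW G {y | p₁ y} k x ↔ RelW G {y | p₂ y} k x) :
    (J.submatrix (Subtype.val : {x // p₁ x} → Fin n) Subtype.val)⁻¹ ⟨k, h1⟩ ⟨k, h1⟩ =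
    (J.submatrix (Subtype.val : {x // p₂ x} → Fin n) Subtype.val)⁻¹ ⟨k, h2⟩ ⟨k, h2⟩ := by
  classical
  have hJs : ∀ a b, J a b = J b a := fun a b => by
    have := hJ.isHermitian.apply b a
    simpa using this
  set κ := {x : Fin n // RelW G {y | p₁ y} k x} with hκ
  set g1 : κ → {x // p₁ x} := fun x => ⟨x.1, x.2.mem_right⟩ with hg1
  set g2 : κ → {x // p₂ x} := fun x => ⟨x.1, ((hcls x.1).mp x.2).mem_right⟩ with hg2
  have hg1inj : Function.Injective g1 := by
    intro a b hab
    apply Subtype.ext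
    have := congrArg (fun z => z.val) hab
    simpa [hg1] using this
  have hg2inj : Function.Injective g2 := by
    intro a b hab
    apply Subtype.ext
    have := congrArg (fun z => z.val) hab
    simpa [hg2] using this
  have hr1 : ∀ b : {x // p₁ x}, b ∈ Set.range g1 ↔ RelW G {y | p₁ y} k b.val := by
    intro b
    constructor
    · rintro ⟨a, rfl⟩; exact a.2
    · intro hb; exact ⟨⟨b.1, hb⟩, Subtype.ext rfl⟩
  have hr2 : ∀ b : {x // p₂ x}, b ∈ Set.range g2 ↔ RelW G {y | p₁ y} k b.val := by
    intro b
    constructor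
    · rintro ⟨a, rfl⟩; exact a.2
    · intro hb; exact ⟨⟨b.1, hb⟩, Subtype.ext rfl⟩
  have hk0 : RelW G {y | p₁ y} k k := RelW.refl h1
  -- first application
  have ha1 : ∀ (a : κ) (b : {x // p₁ x}), b ∉ Set.range g1 →
      (J.submatrix (Subtype.val : {x // p₁ x} → Fin n) Subtype.val) (g1 a) b = 0 := by
    intro a b hb
    rw [hr1] at hb
    simp only [submatrix_apply]
    by_cases heq : (g1 a).val = b.val
    · exact absurd (by rw [← heq]; exact a.2) hb
    · by_cases hadj : G.Adj (g1 a).val b.val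
      · exact absurd (a.2.adj_closure hadj b.2) hb
      · exact hsp _ _ heq hadj
  have ha1' : ∀ (a : κ) (b : {x // p₁ x}), b ∉ Set.range g1 →
      (J.submatrix (Subtype.val : {x // p₁ x} → Fin n) Subtype.val) b (g1 a) = 0 := by
    intro a b hb
    have := ha1 a b hb
    simp only [submatrix_apply] at this ⊢
    rw [hJs]; exact this
  have ha2 : ∀ (a : κ) (b : {x // p₂ x}), b ∉ Set.range g2 →
      (J.submatrix (Subtype.val : {x // p₂ x} → Fin n) Subtype.val) (g2 a) b = 0 := by
    intro a b hb
    rw [hr2] at hb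
    simp only [submatrix_apply]
    by_cases heq : (g2 a).val = b.val
    · exact absurd (by rw [← heq]; exact a.2) hb
    · by_cases hadj : G.Adj (g2 a).val b.val
      · refine absurd ((hcls b.1).mpr ?_) hb
        exact (((hcls _).mp a.2).adj_closure hadj b.2)
      · exact hsp _ _ heq hadj
  have ha2' : ∀ (a : κ) (b : {x // p₂ x}), b ∉ Set.range g2 →
      (J.submatrix (Subtype.val : {x // p₂ x} → Fin n) Subtype.val) b (g2 a) = 0 := by
    intro a b hb
    have := ha2 a b hb
    simp only [submatrix_apply] at this ⊢
    rw [hJs]; exact this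
  have hib1 := (inv_block (posDef_submatrix_inj hJ Subtype.val_injective) g1 hg1inj ha1 ha1').2
  have hib2 := (inv_block (posDef_submatrix_inj hJ Subtype.val_injective) g2 hg2inj ha2 ha2').2
  have e1 := hib1 ⟨k, hk0⟩ ⟨k, hk0⟩
  have e2 := hib2 ⟨k, hk0⟩ ⟨k, hk0⟩
  have hsub1 : (J.submatrix (Subtype.val : {x // p₁ x} → Fin n) Subtype.val).submatrix g1 g1 =
      J.submatrix (Subtype.val : κ → Fin n) Subtype.val := by
    ext a b
    simp [submatrix_apply, hg1]
  have hsub2 : (J.submatrix (Subtype.val : {x // p₂ x} → Fin n) Subtype.val).submatrix g2 g2 =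
      J.submatrix (Subtype.val : κ → Fin n) Subtype.val := by
    ext a b
    simp [submatrix_apply, hg2]
  rw [hsub1] at e1
  rw [hsub2] at e2
  have hg1k : g1 ⟨k, hk0⟩ = ⟨k, h1⟩ := by rw [hg1]
  have hg2k : g2 ⟨k, hk0⟩ = ⟨k, h2⟩ := by rw [hg2]
  rw [hg1k] at e1
  rw [hg2k] at e2
  rw [e1, e2]

end ClassLemmas

theorem tree_inverse_entries {n : ℕ} (G : SimpleGraph (Fin n)) [DecidableRel G.Adj]
    (hG : G.IsTree) (S : Matrix (Fin n) (Fin n) ℝ) (hS : S.PosDef)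
    (hsparse : ∀ i j, i ≠ j → ¬ G.Adj i j → S⁻¹ i j = 0) :
    (∀ i j, G.Adj i j → S⁻¹ i j = S i j / ((S i j) ^ 2 - S i i * S j j)) ∧
    (∀ i, S⁻¹ i i = (1 - (G.degree i : ℝ)) * (S i i)⁻¹ +
        ∑ j ∈ G.neighborFinset i, (S i i - S i j * (S j j)⁻¹ * S j i)⁻¹) := by
  classical
  have hSdet : IsUnit S.det := hS.det_pos.ne'.isUnit
  have hJ : (S⁻¹).PosDef := hS.inv
  have hJinv : S⁻¹⁻¹ = S := Matrix.nonsing_inv_nonsing_inv S hSdet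
  have hSs : ∀ a b, S a b = S b a := fun a b => by
    have := hS.isHermitian.apply b a; simpa using this
  have hsp : ∀ a b : Fin n, a ≠ b → ¬ G.Adj a b → S⁻¹ a b = 0 := hsparse
  constructor
  · -- edge formula
    intro i j hadj
    have hij : i ≠ j := hadj.ne
    set f : Fin 2 → Fin n := ![i, j] with hf
    have hf0 : f 0 = i := rfl
    have hf1 : f 1 = j := rfl
    have hfinj : Function.Injective f := by
      intro a b hab
      fin_cases a <;> fin_cases b <;> simp_all [hf]
    have hrange : ∀ x : Fin n, x ∈ Set.range f ↔ (x = i ∨ x = j) := by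
      intro x
      constructor
      · rintro ⟨a, rfl⟩
        fin_cases a
        · left; rfl
        · right; rfl
      · rintro (rfl | rfl)
        exacts [⟨0, rfl⟩, ⟨1, rfl⟩]
    have hseteq : {x : Fin n | x ∉ Set.range f} = {x : Fin n | x ≠ i ∧ x ≠ j} := by
      ext x; simp [hrange, not_or]
    have hschur := schur_block hJ f hfinj
    rw [hJinv] at hschur
    have hentry := congrArg (fun M : Matrix (Fin 2) (Fin 2) ℝ => M 0 1) hschur
    have hcorr : ((S⁻¹.submatrix f (Subtype.val : {x // x ∉ Set.range f} → Fin n) *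
        (S⁻¹.submatrix (Subtype.val : {x // x ∉ Set.range f} → Fin n)
          (Subtype.val : {x // x ∉ Set.range f} → Fin n))⁻¹ *
        S⁻¹.submatrix (Subtype.val : {x // x ∉ Set.range f} → Fin n) f :
          Matrix (Fin 2) (Fin 2) ℝ)) 0 1 = 0 := by
      rw [Matrix.mul_apply]
      apply Finset.sum_eq_zero
      intro d _
      have hdi : d.val ≠ i := fun h => d.2 ((hrange d.val).mpr (Or.inl h))
      have hdj : d.val ≠ j := fun h => d.2 ((hrange d.val).mpr (Or.inr h))
      by_cases hdadj : G.Adj d.val j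
      case neg =>
        have h0 : S⁻¹.submatrix (Subtype.val : {x // x ∉ Set.range f} → Fin n) f d 1 = 0 := by
          simp only [submatrix_apply, hf1]
          exact hsp _ _ hdj hdadj
        rw [h0, mul_zero]
      case pos =>
        apply mul_eq_zero_of_left
        rw [Matrix.mul_apply]
        apply Finset.sum_eq_zero
        intro c _
        have hci : c.val ≠ i := fun h => c.2 ((hrange c.val).mpr (Or.inl h))
        have hcj : c.val ≠ j := fun h => c.2 ((hrange c.val).mpr (Or.inr h))
        by_cases hcadj : G.Adj i c.val
        case neg =>
          have h0 : S⁻¹.submatrix f (Subtype.val : {x // x ∉ Set.range f} → Fin n) 0 c = 0 := by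
            simp only [submatrix_apply, hf0]
            exact hsp _ _ (Ne.symm hci) hcadj
          rw [h0, zero_mul]
        case pos =>
          apply mul_eq_zero_of_right
          have hrel : ¬ RelW G {x : Fin n | x ∉ Set.range f} c.val d.val := by
            rw [hseteq]
            exact KG2 hG hadj hcadj hdadj.symm hci hcj hdi hdj
          have := class_cross hJ hsp (fun x : Fin n => x ∉ Set.range f) c.2 d.2 hrel
          exact this
    rw [Matrix.sub_apply, hcorr, sub_zero] at hentry
    have hXij : (S⁻¹.submatrix f f) 0 1 = S⁻¹ i j := rfl
    rw [hXij] at hentry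
    have hpd2 : (S.submatrix f f).PosDef := posDef_submatrix_inj hS hfinj
    have hdet2 : (S.submatrix f f).det = S i i * S j j - S i j * S j i := by
      rw [Matrix.det_fin_two]
      simp [submatrix_apply, hf0, hf1]
    have hdetpos := hpd2.det_pos
    rw [hdet2] at hdetpos
    have h21 := inv_two_01 (S.submatrix f f)
    rw [hdet2] at h21
    have hS01 : (S.submatrix f f) 0 1 = S i j := rfl
    rw [hS01] at h21
    rw [h21] at hentry
    have hji : S j i = S i j := hSs j i
    rw [hji] at hentry hdetpos
    have hne : S i j ^ 2 - S i i * S j j ≠ 0 := by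
      intro h
      nlinarith [hdetpos]
    rw [← hentry]
    rw [div_eq_mul_inv, show S i j ^ 2 - S i i * S j j = -(S i i * S j j - S i j * S i j) by ring,
      inv_neg]
    ring
  · -- diagonal formula
    intro i
    set f1 : Fin 1 → Fin n := fun _ => i with hf1d
    have hf1inj : Function.Injective f1 := fun a b _ => Subsingleton.elim a b
    have hrange1 : ∀ x : Fin n, x ∈ Set.range f1 ↔ x = i := by
      intro x
      constructor
      · rintro ⟨a, rfl⟩; rfl
      · rintro rfl; exact ⟨0, rfl⟩
    have hset1 : {x : Fin n | x ∉ Set.range f1} = {x : Fin n | x ≠ i} := by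
      ext x; simp [hrange1]
    have hschur1 := schur_block hJ f1 hf1inj
    rw [hJinv] at hschur1
    have hA := congrArg (fun M : Matrix (Fin 1) (Fin 1) ℝ => M 0 0) hschur1
    simp only [Matrix.sub_apply, Matrix.mul_apply, submatrix_apply] at hA
    set Dinv := (S⁻¹.submatrix (Subtype.val : {x // x ∉ Set.range f1} → Fin n)
        (Subtype.val : {x // x ∉ Set.range f1} → Fin n))⁻¹ with hDinv
    set t : Fin n → ℝ := fun k => if h : k ∈ Set.range f1 then 0
        else S⁻¹ i k * Dinv ⟨k, h⟩ ⟨k, h⟩ * S⁻¹ k i with ht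
    have hf10 : f1 0 = i := rfl
    -- Claim A : (S i i)⁻¹ = S⁻¹ i i - ∑ k ∈ nbr i, t k
    have hsum1 : (∑ d : {x // x ∉ Set.range f1},
        (∑ c : {x // x ∉ Set.range f1}, S⁻¹ (f1 0) c.val * Dinv c d) * S⁻¹ d.val (f1 0))
        = ∑ k ∈ G.neighborFinset i, t k := by
      have hterm : ∀ d : {x // x ∉ Set.range f1},
          (∑ c : {x // x ∉ Set.range f1}, S⁻¹ (f1 0) c.val * Dinv c d) * S⁻¹ d.val (f1 0)
          = t d.val := by
        intro d
        have hdmem : d.val ∉ Set.range f1 := d.2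
        have hdi : d.val ≠ i := fun h => hdmem ((hrange1 d.val).mpr h)
        rw [ht]
        simp only [hf10]
        rw [dif_neg hdmem]
        by_cases hdadj : G.Adj i d.val
        case neg =>
          have hJdi : S⁻¹ d.val i = 0 := hsp _ _ hdi (fun h => hdadj h.symm)
          have hJid : S⁻¹ i d.val = 0 := hsp _ _ (Ne.symm hdi) hdadj
          rw [hJdi, hJid]
          ring
        case pos =>
          congr 1
          rw [Finset.sum_eq_single d]
          · intro c _ hcd
            by_cases hcadj : G.Adj i c.val
            · apply mul_eq_zero_of_right
              have hrel : ¬ RelW G {x : Fin n | x ∉ Set.range f1} c.val d.val := by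
                rw [hset1]
                exact KG1 hG hcadj hdadj (fun h => hcd (Subtype.ext h))
              exact class_cross hJ hsp (fun x : Fin n => x ∉ Set.range f1) c.2 d.2 hrel
            · apply mul_eq_zero_of_left
              have hci : c.val ≠ i := fun h => c.2 ((hrange1 c.val).mpr h)
              exact hsp _ _ (Ne.symm hci) hcadj
          · intro hd; exact absurd (Finset.mem_univ d) hd
      rw [Finset.sum_congr rfl (fun d _ => hterm d)]
      have hconv : ∑ x ∈ Finset.univ.erase i, t x = ∑ d : {x // x ∉ Set.range f1}, t d.val :=
        Finset.sum_subtype _ (fun x => by simp [hrange1, Finset.mem_erase]) t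
      rw [← hconv]
      refine (Finset.sum_subset ?_ ?_).symm
      · intro x hx
        rw [SimpleGraph.mem_neighborFinset] at hx
        exact Finset.mem_erase.mpr ⟨hx.ne', Finset.mem_univ x⟩
      · intro x hx hxn
        rw [Finset.mem_erase] at hx
        rw [SimpleGraph.mem_neighborFinset] at hxn
        have hJix : S⁻¹ i x = 0 := hsp _ _ (Ne.symm hx.1) hxn
        simp only [ht]
        rw [dif_neg (fun h => hx.1 ((hrange1 x).mp h))]
        rw [hJix]
        ring
    rw [hsum1] at hA
    have hS11 : (S.submatrix f1 f1)⁻¹ 0 0 = (S i i)⁻¹ := by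
      rw [inv_one_entry]
      rfl
    rw [hS11, hf10] at hA
    -- hA : (S i i)⁻¹ = S⁻¹ i i - ∑ k ∈ nbr i, t k
    -- Claim B
    have hB : ∀ j ∈ G.neighborFinset i, (S i i - S i j * (S j j)⁻¹ * S j i)⁻¹
        = S⁻¹ i i - ∑ k ∈ (G.neighborFinset i).erase j, t k := by
      intro j hjmem
      rw [SimpleGraph.mem_neighborFinset] at hjmem
      have hij : i ≠ j := hjmem.ne
      set f2 : Fin 2 → Fin n := ![i, j] with hf2d
      have hf20 : f2 0 = i := rfl
      have hf21 : f2 1 = j := rfl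
      have hf2inj : Function.Injective f2 := by
        intro a b hab
        fin_cases a <;> fin_cases b <;> simp_all [hf2d]
      have hrange2 : ∀ x : Fin n, x ∈ Set.range f2 ↔ (x = i ∨ x = j) := by
        intro x
        constructor
        · rintro ⟨a, rfl⟩
          fin_cases a
          · left; rfl
          · right; rfl
        · rintro (rfl | rfl)
          exacts [⟨0, rfl⟩, ⟨1, rfl⟩]
      have hset2 : {x : Fin n | x ∉ Set.range f2} = {x : Fin n | x ≠ i ∧ x ≠ j} := by
        ext x; simp [hrange2, not_or]
      have hschur2 := schur_block hJ f2 hf2inj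
      rw [hJinv] at hschur2
      have hA2 := congrArg (fun M : Matrix (Fin 2) (Fin 2) ℝ => M 0 0) hschur2
      simp only [Matrix.sub_apply, Matrix.mul_apply, submatrix_apply] at hA2
      set D2inv := (S⁻¹.submatrix (Subtype.val : {x // x ∉ Set.range f2} → Fin n)
          (Subtype.val : {x // x ∉ Set.range f2} → Fin n))⁻¹ with hD2inv
      set t2 : Fin n → ℝ := fun k => if h : k ∈ Set.range f2 then 0
          else S⁻¹ i k * D2inv ⟨k, h⟩ ⟨k, h⟩ * S⁻¹ k i with ht2
      -- key : for neighbors k ≠ j of i, t2 k = t k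
      have htt : ∀ k, G.Adj i k → k ≠ j → t2 k = t k := by
        intro k hkadj hkj
        have hki : k ≠ i := hkadj.ne'
        have hk2 : k ∉ Set.range f2 := fun h => by
          rcases (hrange2 k).mp h with h | h
          exacts [hki h, hkj h]
        have hk1 : k ∉ Set.range f1 := fun h => hki ((hrange1 k).mp h)
        simp only [ht, ht2]
        rw [dif_neg hk2, dif_neg hk1]
        congr 1
        congr 1
        -- D2inv ⟨k,_⟩ ⟨k,_⟩ = Dinv ⟨k,_⟩ ⟨k,_⟩
        rw [hDinv, hD2inv]
        apply class_diag hJ hsp (fun x : Fin n => x ∉ Set.range f2)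
          (fun x : Fin n => x ∉ Set.range f1) hk2 hk1
        -- classes agree
        intro x
        have hs2 : {y : Fin n | y ∉ Set.range f2} = {y : Fin n | y ≠ i ∧ y ≠ j} := hset2
        have hs1 : {y : Fin n | y ∉ Set.range f1} = {y : Fin n | y ≠ i} := hset1
        rw [hs2, hs1]
        constructor
        · exact fun h => h.mono (fun y hy => hy.1)
        · rintro ⟨w, hw⟩
          refine ⟨w, fun y hy => ⟨hw y hy, ?_⟩⟩
          -- y ≠ j
          intro hyj
          have hrelky : RelW G {z : Fin n | z ≠ i} k y := by
            refine ⟨w.takeUntil y hy, fun z hz => ?_⟩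
            exact hw z (SimpleGraph.Walk.support_takeUntil_subset w hy hz)
          rw [hyj] at hrelky
          exact KG1 hG hkadj hjmem hkj hrelky
      -- compute the correction sum for f2
      have hsum2 : (∑ d : {x // x ∉ Set.range f2},
          (∑ c : {x // x ∉ Set.range f2}, S⁻¹ (f2 0) c.val * D2inv c d) * S⁻¹ d.val (f2 0))
          = ∑ k ∈ (G.neighborFinset i).erase j, t k := by
        have hterm : ∀ d : {x // x ∉ Set.range f2},
            (∑ c : {x // x ∉ Set.range f2}, S⁻¹ (f2 0) c.val * D2inv c d) * S⁻¹ d.val (f2 0)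
            = t2 d.val := by
          intro d
          have hdmem : d.val ∉ Set.range f2 := d.2
          have hdi : d.val ≠ i := fun h => hdmem ((hrange2 d.val).mpr (Or.inl h))
          rw [ht2]
          simp only [hf20]
          rw [dif_neg hdmem]
          by_cases hdadj : G.Adj i d.val
          case neg =>
            have hJdi : S⁻¹ d.val i = 0 := hsp _ _ hdi (fun h => hdadj h.symm)
            have hJid : S⁻¹ i d.val = 0 := hsp _ _ (Ne.symm hdi) hdadj
            rw [hJdi, hJid]
            ring
          case pos =>
            congr 1
            rw [Finset.sum_eq_single d]
            · intro c _ hcd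
              by_cases hcadj : G.Adj i c.val
              · apply mul_eq_zero_of_right
                have hrel : ¬ RelW G {x : Fin n | x ∉ Set.range f2} c.val d.val := by
                  rw [hset2]
                  intro hrel
                  exact KG1 hG hcadj hdadj (fun h => hcd (Subtype.ext h))
                    (hrel.mono (fun y hy => hy.1))
                exact class_cross hJ hsp (fun x : Fin n => x ∉ Set.range f2) c.2 d.2 hrel
              · apply mul_eq_zero_of_left
                have hci : c.val ≠ i := fun h => c.2 ((hrange2 c.val).mpr (Or.inl h))
                exact hsp _ _ (Ne.symm hci) hcadj
            · intro hd; exact absurd (Finset.mem_univ d) hd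
        rw [Finset.sum_congr rfl (fun d _ => hterm d)]
        have hconv : ∑ x ∈ (Finset.univ.erase i).erase j, t2 x
            = ∑ d : {x // x ∉ Set.range f2}, t2 d.val :=
          Finset.sum_subtype _ (fun x => by
            simp [hrange2, Finset.mem_erase, not_or, and_comm]) t2
        rw [← hconv]
        have hstep : ∑ x ∈ (Finset.univ.erase i).erase j, t2 x
            = ∑ x ∈ (G.neighborFinset i).erase j, t2 x := by
          refine (Finset.sum_subset ?_ ?_).symm
          · intro x hx
            rw [Finset.mem_erase, SimpleGraph.mem_neighborFinset] at hx
            exact Finset.mem_erase.mpr ⟨hx.1,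
              Finset.mem_erase.mpr ⟨hx.2.ne', Finset.mem_univ x⟩⟩
          · intro x hx hxn
            rw [Finset.mem_erase, Finset.mem_erase] at hx
            have hxnbr : ¬ G.Adj i x := by
              intro h
              exact hxn (Finset.mem_erase.mpr ⟨hx.1, (SimpleGraph.mem_neighborFinset G i x).mpr h⟩)
            have hJix : S⁻¹ i x = 0 := hsp _ _ (Ne.symm hx.2.1) hxnbr
            simp only [ht2]
            rw [dif_neg (fun h => by
              rcases (hrange2 x).mp h with h' | h'
              exacts [hx.2.1 h', hx.1 h'])]
            rw [hJix]
            ring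
        rw [hstep]
        refine Finset.sum_congr rfl (fun k hk => ?_)
        rw [Finset.mem_erase, SimpleGraph.mem_neighborFinset] at hk
        exact htt k hk.2 hk.1
      rw [hsum2] at hA2
      -- LHS arithmetic
      have hpd2 : (S.submatrix f2 f2).PosDef := posDef_submatrix_inj hS hf2inj
      have hdet2 : (S.submatrix f2 f2).det = S i i * S j j - S i j * S j i := by
        rw [Matrix.det_fin_two]
        simp [submatrix_apply, hf20, hf21]
      have hdetpos := hpd2.det_pos
      rw [hdet2] at hdetpos
      have h20 := inv_two_00 (S.submatrix f2 f2)
      rw [hdet2] at h20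
      have hS11' : (S.submatrix f2 f2) 1 1 = S j j := rfl
      rw [hS11'] at h20
      rw [h20, hf20] at hA2
      -- now hA2 : (SiiSjj - SijSji)⁻¹ * S j j = S⁻¹ i i - ∑ ...
      have hSjjpos : 0 < S j j := by
        have h1 : (S.submatrix (fun _ : Fin 1 => j) (fun _ : Fin 1 => j)).PosDef :=
          posDef_submatrix_inj hS (fun a b _ => Subsingleton.elim a b)
        have h2 := h1.det_pos
        rwa [Matrix.det_fin_one] at h2
      have heq : S i i - S i j * (S j j)⁻¹ * S j i
          = (S i i * S j j - S i j * S j i) / S j j := by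
        field_simp
      rw [heq, ← hA2, inv_div]
      rw [div_eq_mul_inv, mul_comm]
    -- final assembly
    rw [Finset.sum_congr rfl (fun j hj => by
      rw [hB j hj, Finset.sum_erase_eq_sub hj])]
    rw [Finset.sum_sub_distrib, Finset.sum_sub_distrib, Finset.sum_const, Finset.sum_const]
    rw [hA]
    have hdeg : ((G.neighborFinset i).card : ℝ) = (G.degree i : ℝ) := by
      rw [SimpleGraph.degree]
    simp only [nsmul_eq_mul, hdeg]
    ring
end
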